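/- Let G be a group and p a minimal idempotent ultrafilter on G (an idempotent belonging to a minimal right ideal of βG). Then for any A ∈ p, the set A^{-1}A = {g^{-1}h : g, h ∈ A} is right syndetic, i.e., there is a finite set F ⊆ G with (A^{-1}A)·F = G. -/
import Mathlib


/-- The convolution of two ultrafilters on a group: `A ∈ uconv p q ↔ {g | Ag⁻¹ ∈ p} ∈ q`. -/
def uconv {G : Type*} [Group G] (p q : Ultrafilter G) : Ultrafilter G :=
  q.bind fun g => p.map fun h => h * g

/-- `p` is a minimal idempotent ultrafilter: it is idempotent and belongs to a minimal
right ideal of `(βG, *)`. -/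
def IsMinimalIdempotent {G : Type*} [Group G] (p : Ultrafilter G) : Prop :=
  uconv p p = p ∧
    ∃ I : Set (Ultrafilter G), p ∈ I ∧ (∀ q ∈ I, ∀ r, uconv q r ∈ I) ∧
      ∀ J : Set (Ultrafilter G), J.Nonempty → J ⊆ I →
        (∀ q ∈ J, ∀ r, uconv q r ∈ J) → J = I

lemma mem_uconv {G : Type*} [Group G] (p q : Ultrafilter G) (s : Set G) :
    s ∈ uconv p q ↔ {g | {h | h * g ∈ s} ∈ p} ∈ q := by
  rw [uconv, ← Ultrafilter.mem_coe]
  show s ∈ Filter.bind (↑q) (fun g => ↑(p.map fun h => h * g)) ↔ _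
  rw [Filter.mem_bind']
  rfl

lemma uconv_assoc {G : Type*} [Group G] (p q r : Ultrafilter G) :
    uconv (uconv p q) r = uconv p (uconv q r) := by
  ext s
  simp only [mem_uconv, Set.mem_setOf_eq, mul_assoc]

/-- If `p` is a minimal idempotent ultrafilter on `G` and `A ∈ p`, then `A⁻¹A` is right
syndetic: there is a finite `F ⊆ G` with `(A⁻¹A)·F = G`. -/
theorem stmt_5 {G : Type*} [Group G] (p : Ultrafilter G) (hp : IsMinimalIdempotent p)
    (A : Set G) (hA : A ∈ p) :
    ∃ F : Finset G, ∀ x : G, ∃ f ∈ F, ∃ a ∈ A, ∃ b ∈ A, a⁻¹ * b * f = x := by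
  classical
  by_contra hcon
  push_neg at hcon
  obtain ⟨hidem, I, hpI, hIr, hImin⟩ := hp
  set T : Set G := {g | {h | h * g ∈ A} ∈ p} with hTdef
  -- every element of T is of the form a⁻¹ * b with a, b ∈ A
  have hTA : ∀ g ∈ T, ∃ a ∈ A, ∃ b ∈ A, a⁻¹ * b = g := by
    intro g hg
    obtain ⟨a, ha, hag⟩ := Filter.nonempty_of_mem (Filter.inter_mem hA hg)
    exact ⟨a, ha, a * g, hag, by group⟩
  -- the family {x | x * f ∉ T} (f : G) has the finite intersection property
  have hFIP : ∀ t : Set (Set G), t ⊆ Set.range (fun f : G => {x | x * f ∉ T}) →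
      t.Finite → (⋂₀ t).Nonempty := by
    intro t hts htf
    have hchoose : ∀ s : t, ∃ f : G, {x | x * f ∉ T} = (s : Set G) := fun s => hts s.2
    choose c hc using hchoose
    have : Finite t := htf
    obtain ⟨tf⟩ := nonempty_fintype t
    set F : Finset G := Finset.univ.image (fun s : t => (c s)⁻¹) with hF
    obtain ⟨x, hx⟩ := hcon F
    refine ⟨x, ?_⟩
    intro s hs
    have hcs := hc ⟨s, hs⟩
    simp only [Subtype.coe_mk] at hcs
    rw [← hcs]
    intro hxT
    obtain ⟨a, ha, b, hb, hab⟩ := hTA _ hxT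
    have hfF : (c ⟨s, hs⟩)⁻¹ ∈ F := Finset.mem_image_of_mem _ (Finset.mem_univ _)
    exact hx _ hfF a ha b hb (by rw [hab]; group)
  -- build an ultrafilter q containing all these sets
  have hgen : (Filter.generate (Set.range fun f : G => {x | x * f ∉ T})).NeBot :=
    Filter.generate_neBot_iff.2 hFIP
  let q : Ultrafilter G := @Ultrafilter.of G _ hgen
  have hq : ∀ f : G, {x | x * f ∉ T} ∈ q := fun f =>
    (Ultrafilter.of_le _) (Filter.mem_generate_of_mem ⟨f, rfl⟩)
  -- minimality: p = uconv p s for some s of the form uconv q r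
  set w : Ultrafilter G := uconv p q with hw
  have hwI : w ∈ I := hIr p hpI q
  set J : Set (Ultrafilter G) := {s | ∃ r, s = uconv w r} with hJdef
  have hJI : J = I := by
    refine hImin J ⟨uconv w p, p, rfl⟩ ?_ ?_
    · rintro s ⟨r, rfl⟩
      exact hIr w hwI r
    · rintro s ⟨r0, rfl⟩ r
      exact ⟨uconv r0 r, uconv_assoc w r0 r⟩
  have hpJ : p ∈ J := hJI ▸ hpI
  obtain ⟨r, hr⟩ := hpJ
  rw [hw, uconv_assoc] at hr
  -- derive the contradiction
  have h1 : T ∈ uconv q r := (mem_uconv p (uconv q r) A).1 (hr ▸ hA)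
  have h2 : {g | {h | h * g ∈ T} ∈ q} ∈ r := (mem_uconv q r T).1 h1
  obtain ⟨g, hg⟩ := Filter.nonempty_of_mem h2
  obtain ⟨x, hx1, hx2⟩ := Filter.nonempty_of_mem (Filter.inter_mem hg (hq g))
  exact hx2 hx1
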